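/- The generating set A = {a, a⁻¹, t, t⁻¹} for G = ℤ² ⋊ ℤ/2ℤ (swap action, a = ((1,0),0), t = ((0,0),1)) does not have the falsification by fellow traveler property: for every k ≥ 0 there exists a non-geodesic word w over A such that no strictly shorter word over A representing the same element synchronously k-fellow travels w. (One may take w = t aⁿ t aⁿ t for n sufficiently large compared to k.) -/

import Mathlib

/-- The coordinate-swapping automorphism of ℤ². -/
def swapAut : MulAut (Multiplicative (ℤ × ℤ)) :=
  AddEquiv.toMultiplicative (AddEquiv.prodComm : (ℤ × ℤ) ≃+ (ℤ × ℤ))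

lemma swapAut_sq : swapAut ^ 2 = 1 := by
  refine MulEquiv.ext fun z => ?_
  show swapAut (swapAut z) = z
  cases z
  rfl

/-- The action of ℤ/2ℤ on ℤ² by swapping the two coordinates. -/
def swapAction : Multiplicative (ZMod 2) →* MulAut (Multiplicative (ℤ × ℤ)) where
  toFun ε := swapAut ^ (Multiplicative.toAdd ε).val
  map_one' := rfl
  map_mul' x y := by
    show swapAut ^ _ = swapAut ^ _ * swapAut ^ _
    rw [← pow_add]
    have key : ∀ m n : ℕ, m % 2 = n % 2 → swapAut ^ m = swapAut ^ n := by
      intro m n h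
      rw [← Nat.div_add_mod m 2, ← Nat.div_add_mod n 2, h, pow_add, pow_add,
        pow_mul, pow_mul, swapAut_sq]
      simp
    apply key
    have := ZMod.val_add (Multiplicative.toAdd x) (Multiplicative.toAdd y)
    simp only [toAdd_mul] at *
    omega

/-- The group G = ℤ² ⋊ ℤ/2ℤ with the swap action. -/
abbrev GG := SemidirectProduct (Multiplicative (ℤ × ℤ)) (Multiplicative (ZMod 2)) swapAction

/-- The generator a = ((1,0), 0). -/
def ga : GG := SemidirectProduct.inl (Multiplicative.ofAdd ((1, 0) : ℤ × ℤ))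

/-- The generator t = ((0,0), 1). -/
def gt : GG := SemidirectProduct.inr (Multiplicative.ofAdd (1 : ZMod 2))

/-- The element ((x,y), ε) of G. -/
def el (x y : ℤ) (ε : ZMod 2) : GG :=
  ⟨Multiplicative.ofAdd (x, y), Multiplicative.ofAdd ε⟩

/-- The generating set A = {a, a⁻¹, t, t⁻¹}. -/
def GenSet : Set GG := {ga, ga⁻¹, gt, gt⁻¹}

/-- `w` is a word over the alphabet A. -/
def IsWord (w : List GG) : Prop := ∀ x ∈ w, x ∈ GenSet

/-- `w` is a word over A representing the group element `g` (via its product). -/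
def Represents (w : List GG) (g : GG) : Prop := IsWord w ∧ w.prod = g

/-- The word length of `g`: minimal length of a word over A representing `g`. -/
noncomputable def wordLength (g : GG) : ℕ :=
  sInf {n | ∃ w : List GG, Represents w g ∧ w.length = n}

/-- A word over A is geodesic if no strictly shorter word over A represents
the same element. -/
def IsGeodesic (w : List GG) : Prop :=
  IsWord w ∧ ∀ v : List GG, IsWord v → v.prod = w.prod → w.length ≤ v.length

open Classical in
/-- The number of t-letters of a word (occurrences of t and t⁻¹). -/
noncomputable def tCount (w : List GG) : ℕ :=
  w.countP (fun x => decide (x = gt ∨ x = gt⁻¹))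

/-- The word aˣ over A: x letters `a` if x ≥ 0, |x| letters `a⁻¹` if x < 0. -/
def apow (x : ℤ) : List GG :=
  if 0 ≤ x then List.replicate x.toNat ga else List.replicate (-x).toNat ga⁻¹

/-- The word metric on G with respect to A. -/
noncomputable def dA (g h : GG) : ℕ := wordLength (g⁻¹ * h)

/-- The point of G reached at time i along the word w (the endpoint if i
exceeds the length of w). -/
def pt (w : List GG) (i : ℕ) : GG := (w.take i).prod

/-- Words u and w synchronously k-fellow travel. -/
def FellowTravels (k : ℕ) (u w : List GG) : Prop :=
  ∀ i : ℕ, dA (pt u i) (pt w i) ≤ k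

/-! ### Auxiliary machinery -/

def gX (g : GG) : ℤ := (Multiplicative.toAdd g.left).1
def gY (g : GG) : ℤ := (Multiplicative.toAdd g.left).2
def gE (g : GG) : ZMod 2 := Multiplicative.toAdd g.right

lemma el_eta (g : GG) : el (gX g) (gY g) (gE g) = g := rfl
@[simp] lemma gX_el (x y : ℤ) (e : ZMod 2) : gX (el x y e) = x := rfl
@[simp] lemma gY_el (x y : ℤ) (e : ZMod 2) : gY (el x y e) = y := rfl
@[simp] lemma gE_el (x y : ℤ) (e : ZMod 2) : gE (el x y e) = e := rfl

lemma ga_eq : ga = el 1 0 0 := rfl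
lemma gt_eq : gt = el 0 0 1 := rfl
lemma one_eq : (1 : GG) = el 0 0 0 := rfl

lemma el_mul_zero (x y x' y' : ℤ) (e : ZMod 2) : el x y 0 * el x' y' e = el (x+x') (y+y') e := by
  have h1 : (el x y 0 * el x' y' e).left = (el (x+x') (y+y') e).left := by
    rw [SemidirectProduct.mul_left]
    simp [el, -SemidirectProduct.mk_eq_inl_mul_inr, SemidirectProduct.mul_left, swapAction, swapAut, ← ofAdd_add]
  have h2 : (el x y 0 * el x' y' e).right = (el (x+x') (y+y') e).right := by
    simp [el, SemidirectProduct.mul_right, ← ofAdd_add]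
  exact SemidirectProduct.ext h1 h2

lemma el_mul_one (x y x' y' : ℤ) (e : ZMod 2) : el x y 1 * el x' y' e = el (x+y') (y+x') (1+e) := by
  have h1 : (el x y 1 * el x' y' e).left = (el (x+y') (y+x') (1+e)).left := by
    rw [SemidirectProduct.mul_left]
    simp [el, -SemidirectProduct.mk_eq_inl_mul_inr, SemidirectProduct.mul_left, swapAction, swapAut,
      show ZMod.val (1 : ZMod 2) = 1 from rfl, pow_one, ← ofAdd_add]
  have h2 : (el x y 1 * el x' y' e).right = (el (x+y') (y+x') (1+e)).right := by
    simp [el, SemidirectProduct.mul_right, ← ofAdd_add]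
  exact SemidirectProduct.ext h1 h2

lemma el_inj {x y x' y' : ℤ} {e e' : ZMod 2} (h : el x y e = el x' y' e') :
    x = x' ∧ y = y' ∧ e = e' := by
  refine ⟨congrArg gX h, congrArg gY h, congrArg gE h⟩

lemma inv_el_zero (x y : ℤ) : (el x y 0)⁻¹ = el (-x) (-y) 0 := by
  apply inv_eq_of_mul_eq_one_right
  rw [el_mul_zero]; simp [one_eq]

lemma inv_el_one (x y : ℤ) : (el x y 1)⁻¹ = el (-y) (-x) 1 := by
  apply inv_eq_of_mul_eq_one_right
  rw [el_mul_one]; simp [one_eq, show (1+1 : ZMod 2) = 0 from rfl]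

lemma ga_inv : ga⁻¹ = el (-1) 0 0 := by rw [ga_eq, inv_el_zero]; norm_num
lemma gt_inv : gt⁻¹ = gt := by rw [gt_eq, inv_el_one]; norm_num [gt_eq]

lemma ga_ne_gt : ga ≠ gt := by
  intro h; have h2 : (1 : ℤ) = 0 := congrArg gX h; exact one_ne_zero h2
lemma gainv_ne_gt : ga⁻¹ ≠ gt := by
  rw [ga_inv]; intro h; have h2 : (-1 : ℤ) = 0 := congrArg gX h; omega
lemma ga_ne_gainv : ga ≠ ga⁻¹ := by
  rw [ga_inv]; intro h; have h2 : (1 : ℤ) = -1 := congrArg gX h; omega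

/-- Membership in GenSet, simplified. -/
lemma mem_genset {s : GG} (h : s ∈ GenSet) : s = ga ∨ s = ga⁻¹ ∨ s = gt := by
  rcases h with h | h | h | h
  · exact Or.inl h
  · exact Or.inr (Or.inl h)
  · exact Or.inr (Or.inr h)
  · exact Or.inr (Or.inr (h.trans gt_inv))

open Classical in
noncomputable def aCount (w : List GG) : ℕ :=
  w.countP (fun x => decide (x = ga ∨ x = ga⁻¹))

open Classical in
lemma length_eq_counts {v : List GG} (hv : IsWord v) : v.length = aCount v + tCount v := by
  induction v with
  | nil => rfl
  | cons s rest ih =>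
    have hs := mem_genset (hv s (List.mem_cons_self))
    have hrest : IsWord rest := fun x hx => hv x (List.mem_cons_of_mem _ hx)
    have ihr := ih hrest
    unfold aCount tCount at *
    rw [List.countP_cons, List.countP_cons, List.length_cons, ihr]
    rcases hs with h | h | h <;> subst h <;>
      simp [ga_ne_gt, gainv_ne_gt, ga_ne_gainv, ga_ne_gainv.symm, gt_inv,
        (gt_inv ▸ ga_ne_gt : ga ≠ gt), ga_ne_gt.symm, gainv_ne_gt.symm] <;> omega

/-- The main invariants. -/
lemma invariant {v : List GG} (hv : IsWord v) :
    |gX v.prod| + |gY v.prod| ≤ (aCount v : ℤ) ∧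
    ((tCount v : ZMod 2) = gE v.prod) ∧
    (gY v.prod ≠ 0 → 1 ≤ tCount v) := by
  induction v with
  | nil => simp [aCount, tCount, one_eq]
  | cons s rest ih =>
    have hs := mem_genset (hv s (List.mem_cons_self))
    have hrest : IsWord rest := fun x hx => hv x (List.mem_cons_of_mem _ hx)
    obtain ⟨i1, i2, i3⟩ := ih hrest
    rw [List.prod_cons]
    have heta : rest.prod = el (gX rest.prod) (gY rest.prod) (gE rest.prod) := (el_eta _).symm
    set X := gX rest.prod with hXdef
    set Y := gY rest.prod with hYdef
    set E := gE rest.prod with hEdef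
    rcases hs with h | h | h <;> subst h
    · have hmul : ga * rest.prod = el (1 + X) Y E := by
        conv_lhs => rw [ga_eq, heta]
        rw [el_mul_zero]; norm_num
      have hA : aCount (ga :: rest) = aCount rest + 1 := by
        unfold aCount; rw [List.countP_cons]; simp
      have hT : tCount (ga :: rest) = tCount rest := by
        unfold tCount; rw [List.countP_cons]
        simp [ga_ne_gt, gt_inv ▸ ga_ne_gt]
      rw [hmul]
      have habs : |1 + X| ≤ 1 + |X| := by
        calc |1 + X| ≤ |(1:ℤ)| + |X| := abs_add_le 1 X
        _ = 1 + |X| := by norm_num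
      refine ⟨by simp only [gX_el, gY_el]; push_cast [hA]; omega,
        by simp only [gE_el, hT, i2],
        fun hy => i3 (by simpa using hy)⟩
    · have hmul : ga⁻¹ * rest.prod = el (-1 + X) Y E := by
        conv_lhs => rw [ga_inv, heta]
        rw [el_mul_zero]; norm_num
      have hA : aCount (ga⁻¹ :: rest) = aCount rest + 1 := by
        unfold aCount; rw [List.countP_cons]; simp
      have hT : tCount (ga⁻¹ :: rest) = tCount rest := by
        unfold tCount; rw [List.countP_cons]
        simp [gainv_ne_gt, gt_inv ▸ gainv_ne_gt]
      rw [hmul]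
      have habs : |-1 + X| ≤ 1 + |X| := by
        calc |-1 + X| ≤ |(-1:ℤ)| + |X| := abs_add_le (-1) X
        _ = 1 + |X| := by norm_num
      refine ⟨by simp only [gX_el, gY_el]; push_cast [hA]; omega,
        by simp only [gE_el, hT, i2],
        fun hy => i3 (by simpa using hy)⟩
    · have hmul : gt * rest.prod = el Y X (1 + E) := by
        conv_lhs => rw [gt_eq, heta]
        rw [el_mul_one]
        norm_num
      have hA : aCount (gt :: rest) = aCount rest := by
        unfold aCount; rw [List.countP_cons]
        simp [ga_ne_gt.symm, gainv_ne_gt.symm]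
      have hT : tCount (gt :: rest) = tCount rest + 1 := by
        unfold tCount; rw [List.countP_cons]; simp
      rw [hmul]
      refine ⟨by simp only [gX_el, gY_el]; rw [hA]; omega,
        by simp only [gE_el, hT]; push_cast [i2]; ring,
        fun hy => by rw [hT]; omega⟩

lemma replicate_ga_prod (m : ℕ) : (List.replicate m ga).prod = el m 0 0 := by
  induction m with
  | zero => simp [one_eq]
  | succ j ih =>
    rw [List.replicate_succ, List.prod_cons, ih, ga_eq, el_mul_zero]
    push_cast; ring_nf

lemma replicate_gainv_prod (m : ℕ) : (List.replicate m ga⁻¹).prod = el (-m) 0 0 := by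
  induction m with
  | zero => simp [one_eq]
  | succ j ih =>
    rw [List.replicate_succ, List.prod_cons, ih, ga_inv, el_mul_zero]
    push_cast; ring_nf

lemma apow_prod (x : ℤ) : (apow x).prod = el x 0 0 := by
  unfold apow
  split
  · rw [replicate_ga_prod]
    congr 1
    omega
  · rw [replicate_gainv_prod]
    congr 1
    omega

lemma apow_isword (x : ℤ) : IsWord (apow x) := by
  intro s hs
  unfold apow at hs
  split at hs <;> rw [List.eq_of_mem_replicate hs]
  · exact Or.inl rfl
  · exact Or.inr (Or.inl rfl)

lemma apow_length (x : ℤ) : (apow x).length = x.natAbs := by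
  unfold apow; split <;> simp <;> omega

lemma gt_isgen : gt ∈ GenSet := Or.inr (Or.inr (Or.inl rfl))

lemma exists_repr (g : GG) : ∃ w : List GG, Represents w g := by
  have he : gE g = 0 ∨ gE g = 1 := by
    have : ∀ e : ZMod 2, e = 0 ∨ e = 1 := by decide
    exact this _
  have hmid : (apow (gX g) ++ [gt] ++ apow (gY g)).prod = el (gX g) (gY g) 1 := by
    rw [List.prod_append, List.prod_append, apow_prod, apow_prod, List.prod_singleton]
    rw [gt_eq, el_mul_zero, el_mul_one]
    norm_num
  have hword : IsWord (apow (gX g) ++ [gt] ++ apow (gY g)) := by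
    intro s hs
    simp only [List.mem_append, List.mem_singleton] at hs
    rcases hs with (hs | hs) | hs
    · exact apow_isword _ _ hs
    · exact hs ▸ gt_isgen
    · exact apow_isword _ _ hs
  rcases he with he | he
  · refine ⟨apow (gX g) ++ [gt] ++ apow (gY g) ++ [gt], ?_, ?_⟩
    · intro s hs
      simp only [List.mem_append, List.mem_singleton] at hs
      rcases hs with ((hs | hs) | hs) | hs
      exacts [apow_isword _ _ hs, hs ▸ gt_isgen, apow_isword _ _ hs, hs ▸ gt_isgen]
    · rw [List.prod_append, hmid, List.prod_singleton, gt_eq, el_mul_one]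
      conv_rhs => rw [← el_eta g]
      rw [he]
      norm_num
      rfl
  · refine ⟨apow (gX g) ++ [gt] ++ apow (gY g), hword, ?_⟩
    rw [hmid]
    conv_rhs => rw [← el_eta g, he]

lemma wordLength_ge (g : GG) : |gX g| + |gY g| ≤ (wordLength g : ℤ) := by
  have hne : {n | ∃ w : List GG, Represents w g ∧ w.length = n}.Nonempty := by
    obtain ⟨w, hw⟩ := exists_repr g
    exact ⟨w.length, w, hw, rfl⟩
  obtain ⟨w, ⟨hword, hprod⟩, hlen⟩ := Nat.sInf_mem hne
  have h1 := (invariant hword).1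
  have h2 : aCount w ≤ w.length := List.countP_le_length
  rw [hprod] at h1
  unfold wordLength
  rw [← hlen]
  have := Int.ofNat_le.mpr h2
  omega

lemma dA_ge (p q : GG) : |gX (p⁻¹ * q)| + |gY (p⁻¹ * q)| ≤ (dA p q : ℤ) := wordLength_ge _

lemma zmod2_cases (e : ZMod 2) : e = 0 ∨ e = 1 := by
  fin_cases e
  · exact Or.inl rfl
  · exact Or.inr rfl

/-- The generating set A does not have the falsification by fellow traveler
property: for every k there is a non-geodesic word w over A (one may take
w = t aⁿ t aⁿ t for suitable n) such that no strictly shorter word over A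
representing the same element k-fellow travels w. -/
theorem no_fftp :
    ∀ k : ℕ, ∃ w : List GG,
      (∃ n : ℕ, w = [gt] ++ apow n ++ [gt] ++ apow n ++ [gt]) ∧
      IsWord w ∧ ¬ IsGeodesic w ∧
      ∀ v : List GG, IsWord v → v.prod = w.prod → v.length < w.length →
        ¬ FellowTravels k v w := by
  intro k
  set n : ℕ := k + 1 with hn
  set W : List GG := [gt] ++ apow (n:ℤ) ++ [gt] ++ apow (n:ℤ) ++ [gt] with hW
  have hone : ((1:ZMod 2) + 1) = 0 := rfl
  have hg1 : gt * el (n:ℤ) 0 0 = el 0 (n:ℤ) 1 := by rw [gt_eq, el_mul_one]; norm_num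
  have hg2 : el 0 (n:ℤ) 1 * gt = el 0 (n:ℤ) 0 := by
    rw [gt_eq, el_mul_one, hone]; norm_num
  have hg3 : el 0 (n:ℤ) 0 * el (n:ℤ) 0 0 = el (n:ℤ) (n:ℤ) 0 := by
    rw [el_mul_zero]; norm_num
  have hg4 : el (n:ℤ) (n:ℤ) 0 * gt = el (n:ℤ) (n:ℤ) 1 := by
    rw [gt_eq, el_mul_zero]; norm_num
  have hWprod : W.prod = el (n:ℤ) (n:ℤ) 1 := by
    rw [hW]
    simp only [List.prod_append, List.prod_singleton, apow_prod]
    rw [hg1, hg2, hg3, hg4]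
  have hWlen : W.length = 2*n+3 := by
    rw [hW]; simp [apow_length]; omega
  have hWword : IsWord W := by
    intro s hs
    rw [hW] at hs
    simp only [List.mem_append, List.mem_singleton] at hs
    rcases hs with (((hs|hs)|hs)|hs)|hs
    exacts [hs ▸ gt_isgen, apow_isword _ _ hs, hs ▸ gt_isgen, apow_isword _ _ hs,
      hs ▸ gt_isgen]
  have habs : |(n:ℤ)| = (n:ℤ) := by simp
  refine ⟨W, ⟨n, hW⟩, hWword, ?_, ?_⟩
  · -- not geodesic
    rintro ⟨-, hgeo⟩
    have hv0word : IsWord (apow (n:ℤ) ++ [gt] ++ apow (n:ℤ)) := by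
      intro s hs
      simp only [List.mem_append, List.mem_singleton] at hs
      rcases hs with (hs|hs)|hs
      exacts [apow_isword _ _ hs, hs ▸ gt_isgen, apow_isword _ _ hs]
    have hv0prod : (apow (n:ℤ) ++ [gt] ++ apow (n:ℤ)).prod = el (n:ℤ) (n:ℤ) 1 := by
      rw [List.prod_append, List.prod_append, List.prod_singleton, apow_prod]
      rw [gt_eq, el_mul_zero, el_mul_one]
      norm_num
    have hle := hgeo _ hv0word (by rw [hv0prod, hWprod])
    have hv0len : (apow (n:ℤ) ++ [gt] ++ apow (n:ℤ)).length = 2*n+1 := by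
      simp [apow_length]; omega
    omega
  · intro v hv hvprod hvlen hFT
    rw [hWprod] at hvprod
    rw [hWlen] at hvlen
    obtain ⟨i1, i2, i3⟩ := invariant hv
    rw [hvprod] at i1 i2 i3
    simp only [gX_el, gY_el, gE_el] at i1 i2 i3
    rw [habs] at i1
    have hlc : v.length = aCount v + tCount v := length_eq_counts hv
    have haC : 2*n ≤ aCount v := by exact_mod_cast (by omega : (2*n : ℤ) ≤ (aCount v : ℤ))
    have htCv : tCount v = 1 := by
      have h2 : tCount v ≤ 2 := by omega
      rcases (by omega : tCount v = 0 ∨ tCount v = 1 ∨ tCount v = 2) with h|h|h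
      · rw [h] at i2; norm_num at i2
      · exact h
      · rw [h] at i2; norm_num at i2
        exact absurd i2 (by decide)
    set P := v.take (n+1) with hP
    set S := v.drop (n+1) with hS
    have hvlen' : n+1 ≤ v.length := by omega
    have hPS : P ++ S = v := List.take_append_drop _ _
    have hPlen : P.length = n+1 := by rw [hP, List.length_take]; omega
    have hPword : IsWord P := fun s hs => hv s (List.mem_of_mem_take hs)
    have hSword : IsWord S := fun s hs => hv s (List.mem_of_mem_drop hs)
    have hcT : tCount P + tCount S = tCount v := by
      unfold tCount; rw [← hPS, List.countP_append]
    have hSprod : S.prod = P.prod⁻¹ * el (n:ℤ) (n:ℤ) 1 := by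
      rw [← hvprod, ← hPS, List.prod_append, inv_mul_cancel_left]
    have hptw : pt W (n+1) = el 0 (n:ℤ) 1 := by
      show (W.take (n+1)).prod = _
      have hassoc : W = ([gt] ++ apow (n:ℤ)) ++ ([gt] ++ apow (n:ℤ) ++ [gt]) := by
        rw [hW]; simp [List.append_assoc]
      have hfl : ([gt] ++ apow (n:ℤ)).length = n+1 := by simp [apow_length]
      rw [hassoc, List.take_left' hfl, List.prod_append, List.prod_singleton, apow_prod, hg1]
    have hd := hFT (n+1)
    rw [hptw] at hd
    have hptv : pt v (n+1) = P.prod := rfl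
    rw [hptv] at hd
    have hdge := dA_ge P.prod (el 0 (n:ℤ) 1)
    have hdk : ((dA P.prod (el 0 (n:ℤ) 1) : ℤ)) ≤ (k:ℤ) := by exact_mod_cast hd
    obtain ⟨iP1, iP2, iP3⟩ := invariant hPword
    rcases zmod2_cases (gE P.prod) with he | he
    · -- parity of prefix is 0 : prefix contains no t, so gY P.prod = 0
      have htP : tCount P = 0 := by
        rcases (by omega : tCount P = 0 ∨ tCount P = 1) with h|h
        · exact h
        · rw [h, he] at iP2; norm_num at iP2
      have hy0 : gY P.prod = 0 := by
        by_contra hy; have := iP3 hy; omega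
      have hpinv : P.prod⁻¹ = el (-(gX P.prod)) 0 0 := by
        conv_lhs => rw [← el_eta P.prod, hy0, he]
        rw [inv_el_zero]; norm_num
      have hmul : P.prod⁻¹ * el 0 (n:ℤ) 1 = el (-(gX P.prod)) (n:ℤ) 1 := by
        rw [hpinv, el_mul_zero]; norm_num
      rw [hmul] at hdge
      simp only [gX_el, gY_el] at hdge
      rw [habs] at hdge
      have := abs_nonneg (-(gX P.prod))
      omega
    · -- parity of prefix is 1 : suffix contains no t, so gX P.prod = n
      have htP : tCount P = 1 := by
        rcases (by omega : tCount P = 0 ∨ tCount P = 1) with h|h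
        · rw [h, he] at iP2; norm_num at iP2
        · exact h
      have htS : tCount S = 0 := by omega
      have hpinv : P.prod⁻¹ = el (-(gY P.prod)) (-(gX P.prod)) 1 := by
        conv_lhs => rw [← el_eta P.prod, he]
        rw [inv_el_one]
      have hSprod' : S.prod = el ((n:ℤ) - gY P.prod) ((n:ℤ) - gX P.prod) 0 := by
        rw [hSprod, hpinv, el_mul_one, hone]
        congr 1 <;> ring
      obtain ⟨iS1, iS2, iS3⟩ := invariant hSword
      have hxn : gX P.prod = n := by
        by_contra hx
        have hne : gY S.prod ≠ 0 := by
          rw [hSprod']; simp only [gY_el]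
          intro hc; exact hx (by omega)
        have := iS3 hne; omega
      have hmul : P.prod⁻¹ * el 0 (n:ℤ) 1 = el ((n:ℤ) - gY P.prod) (-(gX P.prod)) 0 := by
        rw [hpinv, el_mul_one, hone]
        congr 1 <;> ring
      rw [hmul] at hdge
      simp only [gX_el, gY_el] at hdge
      rw [hxn, abs_neg, habs] at hdge
      have := abs_nonneg ((n:ℤ) - gY P.prod)
      omega
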